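/- arXiv:0901.3408 — 3 statements merged into one kernel-verified Lean document; each statement's English description precedes it below -/
import Mathlib

section
/- A set S ⊆ ℂ^n is uniquely 1-sparse decodable (i.e., for every unitary matrix Ψ, at most one element of S is 1-sparse with respect to Ψ) if and only if for all distinct a, b ∈ S we have 0 < |⟨a,b⟩| < ‖a‖₂·‖b‖₂, where for this statement all elements of S are assumed nonzero and n ≥ 2. -/
open Matrix Finset Complex

noncomputable def inn {n : ℕ} (a b : Fin n → ℂ) : ℂ := ∑ i, (starRingEnd ℂ) (a i) * b i

noncomputable def l2norm {n : ℕ} (x : Fin n → ℂ) : ℝ := Real.sqrt (∑ i, ‖x i‖ ^ 2)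

def sparse {n : ℕ} (k : ℕ) (Ψ : Matrix (Fin n) (Fin n) ℂ) (x : Fin n → ℂ) : Prop :=
  (Finset.univ.filter (fun i => (Ψᴴ *ᵥ x) i ≠ 0)).card ≤ k

def toE {n : ℕ} (x : Fin n → ℂ) : EuclideanSpace ℂ (Fin n) := WithLp.toLp 2 x

lemma inn_eq_inner {n : ℕ} (a b : Fin n → ℂ) : inn a b = inner ℂ (toE a) (toE b) := by
  simp [inn, toE, PiLp.inner_apply, RCLike.inner_apply, mul_comm]

lemma l2norm_eq {n : ℕ} (x : Fin n → ℂ) : l2norm x = ‖toE x‖ := by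
  simp [l2norm, toE, EuclideanSpace.norm_eq]

lemma inn_eq_dot {n : ℕ} (a b : Fin n → ℂ) : inn a b = star a ⬝ᵥ b := by
  simp [inn, dotProduct, Pi.star_apply]

lemma unitary_cancel {n : ℕ} {Ψ : Matrix (Fin n) (Fin n) ℂ}
    (hΨ : Ψ ∈ Matrix.unitaryGroup (Fin n) ℂ) (x : Fin n → ℂ) :
    Ψ *ᵥ (Ψᴴ *ᵥ x) = x := by
  rw [Matrix.mulVec_mulVec, ← Matrix.star_eq_conjTranspose,
    (Matrix.mem_unitaryGroup_iff).mp hΨ, Matrix.one_mulVec]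

lemma inn_unitary {n : ℕ} {Ψ : Matrix (Fin n) (Fin n) ℂ}
    (hΨ : Ψ ∈ Matrix.unitaryGroup (Fin n) ℂ) (a b : Fin n → ℂ) :
    inn (Ψᴴ *ᵥ a) (Ψᴴ *ᵥ b) = inn a b := by
  rw [inn_eq_dot, inn_eq_dot, Matrix.star_mulVec, Matrix.conjTranspose_conjTranspose,
    ← Matrix.dotProduct_mulVec, Matrix.mulVec_mulVec, ← Matrix.star_eq_conjTranspose,
    (Matrix.mem_unitaryGroup_iff).mp hΨ, Matrix.one_mulVec]

lemma mulVec_ne_zero {n : ℕ} {Ψ : Matrix (Fin n) (Fin n) ℂ}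
    (hΨ : Ψ ∈ Matrix.unitaryGroup (Fin n) ℂ) {x : Fin n → ℂ} (hx : x ≠ 0) :
    Ψᴴ *ᵥ x ≠ 0 := by
  intro h
  apply hx
  have := unitary_cancel hΨ x
  rw [h, Matrix.mulVec_zero] at this
  exact this.symm

lemma sparse_of {n : ℕ} {Ψ : Matrix (Fin n) (Fin n) ℂ} {x : Fin n → ℂ} (i : Fin n)
    (h : ∀ j, j ≠ i → (Ψᴴ *ᵥ x) j = 0) : sparse 1 Ψ x := by
  unfold sparse
  calc (Finset.univ.filter (fun j => (Ψᴴ *ᵥ x) j ≠ 0)).card ≤ ({i} : Finset (Fin n)).card := by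
        apply Finset.card_le_card
        intro j hj
        simp only [Finset.mem_filter] at hj
        simp only [Finset.mem_singleton]
        by_contra hji
        exact hj.2 (h j hji)
    _ = 1 := Finset.card_singleton i

lemma sparse_struct {n : ℕ} {Ψ : Matrix (Fin n) (Fin n) ℂ} {x : Fin n → ℂ}
    (hs : sparse 1 Ψ x) (hx : Ψᴴ *ᵥ x ≠ 0) :
    ∃ i, (Ψᴴ *ᵥ x) i ≠ 0 ∧ ∀ j, j ≠ i → (Ψᴴ *ᵥ x) j = 0 := by
  obtain ⟨i, hi⟩ := Function.ne_iff.mp hx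
  refine ⟨i, hi, fun j hj => ?_⟩
  by_contra hj0
  have hsub : ({i, j} : Finset (Fin n)) ⊆ Finset.univ.filter (fun k => (Ψᴴ *ᵥ x) k ≠ 0) := by
    intro k hk
    simp only [Finset.mem_insert, Finset.mem_singleton] at hk
    simp only [Finset.mem_filter, Finset.mem_univ, true_and]
    rcases hk with rfl | rfl
    · simpa using hi
    · exact hj0
  have h2 : 2 ≤ (Finset.univ.filter (fun k => (Ψᴴ *ᵥ x) k ≠ 0)).card := by
    have := Finset.card_le_card hsub
    rwa [Finset.card_insert_of_notMem (by simpa using hj.symm), Finset.card_singleton] at this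
  have hs1 : (Finset.univ.filter (fun k => (Ψᴴ *ᵥ x) k ≠ 0)).card ≤ 1 := hs
  omega

noncomputable def bmat {n : ℕ} (B : OrthonormalBasis (Fin n) ℂ (EuclideanSpace ℂ (Fin n))) :
    Matrix (Fin n) (Fin n) ℂ := Matrix.of fun i j => B j i

lemma bmat_mem {n : ℕ} (B : OrthonormalBasis (Fin n) ℂ (EuclideanSpace ℂ (Fin n))) :
    bmat B ∈ Matrix.unitaryGroup (Fin n) ℂ := by
  rw [Matrix.mem_unitaryGroup_iff']
  ext j k
  have horth := orthonormal_iff_ite.mp B.orthonormal j k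
  have : (inner ℂ (B j) (B k) : ℂ) = ∑ i, (starRingEnd ℂ) (B j i) * (B k i) := by
    simp [PiLp.inner_apply, RCLike.inner_apply, mul_comm]
  rw [this] at horth
  simp only [Matrix.mul_apply, Matrix.star_apply, Matrix.one_apply, bmat, Matrix.of_apply,
    RCLike.star_def]
  rw [horth]

lemma bmat_mulVec {n : ℕ} (B : OrthonormalBasis (Fin n) ℂ (EuclideanSpace ℂ (Fin n)))
    (x : Fin n → ℂ) (j : Fin n) : ((bmat B)ᴴ *ᵥ x) j = inner ℂ (B j) (toE x) := by
  simp [Matrix.mulVec, dotProduct, Matrix.conjTranspose_apply, bmat,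
    PiLp.inner_apply, RCLike.inner_apply, toE, mul_comm]

lemma sparse_of_basis {n : ℕ} (B : OrthonormalBasis (Fin n) ℂ (EuclideanSpace ℂ (Fin n)))
    {x : Fin n → ℂ} {i : Fin n} {c : ℂ} (hx : toE x = c • B i) : sparse 1 (bmat B) x := by
  apply sparse_of i
  intro j hj
  rw [bmat_mulVec, hx, inner_smul_right]
  have := orthonormal_iff_ite.mp B.orthonormal j i
  rw [if_neg hj] at this
  rw [this, mul_zero]

theorem stmt6 {n : ℕ} (hn : 2 ≤ n) (S : Set (Fin n → ℂ)) (hS : ∀ x ∈ S, x ≠ 0) :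
    (∀ Ψ : Matrix (Fin n) (Fin n) ℂ, Ψ ∈ Matrix.unitaryGroup (Fin n) ℂ →
        ∀ a ∈ S, ∀ b ∈ S, sparse 1 Ψ a → sparse 1 Ψ b → a = b) ↔
    (∀ a ∈ S, ∀ b ∈ S, a ≠ b →
        0 < ‖inn a b‖ ∧ ‖inn a b‖ < l2norm a * l2norm b) := by
  have hcard : Module.finrank ℂ (EuclideanSpace ℂ (Fin n)) = Fintype.card (Fin n) := by
    simp
  constructor
  · intro hdec a ha b hb hab
    have ha0 : a ≠ 0 := hS a ha
    have hb0 : b ≠ 0 := hS b hb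
    have hfa0 : toE a ≠ (0 : EuclideanSpace ℂ (Fin n)) := by simpa [toE] using ha0
    have hfb0 : toE b ≠ (0 : EuclideanSpace ℂ (Fin n)) := by simpa [toE] using hb0
    have hna : ‖toE a‖ ≠ 0 := norm_ne_zero_iff.mpr hfa0
    have hnb : ‖toE b‖ ≠ 0 := norm_ne_zero_iff.mpr hfb0
    have hnac : ((‖toE a‖ : ℝ) : ℂ) ≠ 0 := by exact_mod_cast hna
    have hnbc : ((‖toE b‖ : ℝ) : ℂ) ≠ 0 := by exact_mod_cast hnb
    set i₀ : Fin n := ⟨0, by omega⟩ with hi₀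
    set i₁ : Fin n := ⟨1, by omega⟩ with hi₁
    have h01 : i₀ ≠ i₁ := by simp [hi₀, hi₁, Fin.ext_iff]
    set ua : EuclideanSpace ℂ (Fin n) := ((‖toE a‖ : ℂ))⁻¹ • toE a with hua
    set ub : EuclideanSpace ℂ (Fin n) := ((‖toE b‖ : ℂ))⁻¹ • toE b with hub
    have huaa : (inner ℂ ua ua : ℂ) = 1 := by
      rw [hua, inner_smul_left, inner_smul_right, inner_self_eq_norm_sq_to_K]
      rw [map_inv₀, Complex.conj_ofReal, RCLike.ofReal_eq_complex_ofReal]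
      field_simp
    have hubb : (inner ℂ ub ub : ℂ) = 1 := by
      rw [hub, inner_smul_left, inner_smul_right, inner_self_eq_norm_sq_to_K]
      rw [map_inv₀, Complex.conj_ofReal, RCLike.ofReal_eq_complex_ofReal]
      field_simp
    have htaa : toE a = (‖toE a‖ : ℂ) • ua := by
      rw [hua, smul_smul, mul_inv_cancel₀ hnac, one_smul]
    have htbb : toE b = (‖toE b‖ : ℂ) • ub := by
      rw [hub, smul_smul, mul_inv_cancel₀ hnbc, one_smul]
    constructor
    · -- 0 < |inn a b|
      rw [norm_pos_iff]
      intro h0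
      have hinner0 : (inner ℂ (toE a) (toE b) : ℂ) = 0 := by rw [← inn_eq_inner]; exact h0
      have huab : (inner ℂ ua ub : ℂ) = 0 := by
        rw [hua, hub, inner_smul_left, inner_smul_right, hinner0]; ring
      have huba : (inner ℂ ub ua : ℂ) = 0 := by
        rw [← inner_conj_symm, huab, map_zero]
      set v : Fin n → EuclideanSpace ℂ (Fin n) := fun i => if i = i₀ then ua else ub with hv
      have hv0 : v i₀ = ua := by simp [hv]
      have hv1 : v i₁ = ub := by simp [hv, Ne.symm h01]
      have horth : Orthonormal ℂ (({i₀, i₁} : Set (Fin n)).domRestrict v) := by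
        rw [orthonormal_iff_ite]
        rintro ⟨i, hi⟩ ⟨j, hj⟩
        simp only [Set.mem_insert_iff, Set.mem_singleton_iff] at hi hj
        simp only [Set.domRestrict_apply, Subtype.mk.injEq]
        rcases hi with rfl | rfl <;> rcases hj with rfl | rfl
        · rw [hv0, if_pos rfl]; exact huaa
        · rw [hv0, hv1, if_neg h01]; exact huab
        · rw [hv1, hv0, if_neg (Ne.symm h01)]; exact huba
        · rw [hv1, if_pos rfl]; exact hubb
      obtain ⟨B, hB⟩ := horth.exists_orthonormalBasis_extension_of_card_eq hcard
      have hBa : B i₀ = ua := by rw [hB i₀ (by simp)]; exact hv0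
      have hBb : B i₁ = ub := by rw [hB i₁ (by simp)]; exact hv1
      have hsa : sparse 1 (bmat B) a := sparse_of_basis B (by rw [hBa]; exact htaa)
      have hsb : sparse 1 (bmat B) b := sparse_of_basis B (by rw [hBb]; exact htbb)
      exact hab (hdec (bmat B) (bmat_mem B) a ha b hb hsa hsb)
    · -- strict inequality
      have hle : ‖inn a b‖ ≤ l2norm a * l2norm b := by
        rw [inn_eq_inner, l2norm_eq, l2norm_eq]
        exact norm_inner_le_norm _ _
      rcases lt_or_eq_of_le hle with h | h
      · exact h
      · exfalso
        have heq : ‖(inner ℂ (toE a) (toE b) : ℂ)‖ = ‖toE a‖ * ‖toE b‖ := by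
          rw [← inn_eq_inner, ← l2norm_eq, ← l2norm_eq] at *
          exact h
        obtain ⟨r, hr0, hr⟩ := (norm_inner_eq_norm_iff hfa0 hfb0).mp heq
        set v : Fin n → EuclideanSpace ℂ (Fin n) := fun _ => ua with hv
        have horth : Orthonormal ℂ (({i₀} : Set (Fin n)).domRestrict v) := by
          rw [orthonormal_iff_ite]
          rintro ⟨i, hi⟩ ⟨j, hj⟩
          simp only [Set.mem_singleton_iff] at hi hj
          subst hi; subst hj
          simp only [Set.domRestrict_apply, hv, Subtype.mk.injEq, eq_self_iff_true, if_true]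
          exact huaa
        obtain ⟨B, hB⟩ := horth.exists_orthonormalBasis_extension_of_card_eq hcard
        have hBa : B i₀ = ua := by rw [hB i₀ (by simp), hv]
        have hsa : sparse 1 (bmat B) a := sparse_of_basis B (by rw [hBa]; exact htaa)
        have htb : toE b = (r * (‖toE a‖ : ℂ)) • B i₀ := by
          rw [hBa]
          conv_lhs => rw [hr, htaa]
          rw [smul_smul]
        have hsb : sparse 1 (bmat B) b := sparse_of_basis B htb
        exact hab (hdec (bmat B) (bmat_mem B) a ha b hb hsa hsb)
  · intro h Ψ hΨ a ha b hb spa spb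
    by_contra hab
    obtain ⟨h1, h2⟩ := h a ha b hb hab
    have hu0 : Ψᴴ *ᵥ a ≠ 0 := mulVec_ne_zero hΨ (hS a ha)
    have hv0 : Ψᴴ *ᵥ b ≠ 0 := mulVec_ne_zero hΨ (hS b hb)
    obtain ⟨i, hui, hu⟩ := sparse_struct spa hu0
    obtain ⟨j, hvj, hv⟩ := sparse_struct spb hv0
    have hinv : inn (Ψᴴ *ᵥ a) (Ψᴴ *ᵥ b) = inn a b := inn_unitary hΨ a b
    by_cases hij : i = j
    · -- parallel case
      subst hij
      set c : ℂ := (Ψᴴ *ᵥ b) i / (Ψᴴ *ᵥ a) i with hc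
      have hbc : Ψᴴ *ᵥ b = c • (Ψᴴ *ᵥ a) := by
        funext k
        by_cases hk : k = i
        · subst hk
          simp only [Pi.smul_apply, smul_eq_mul, hc]
          rw [div_mul_cancel₀ _ hui]
        · rw [hv k hk, Pi.smul_apply, hu k hk, smul_eq_mul, mul_zero]
      have hba : b = c • a := by
        have := congrArg (fun w => Ψ *ᵥ w) hbc
        simpa [unitary_cancel hΨ, Matrix.mulVec_smul] using this
      have heq : ‖inn a b‖ = l2norm a * l2norm b := by
        rw [hba, inn_eq_inner, l2norm_eq, l2norm_eq]
        have : toE (c • a) = c • toE a := rfl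
        rw [this, inner_smul_right, inner_self_eq_norm_sq_to_K, norm_smul]
        simp [map_pow]
        rw [sq]
        ring
      rw [heq] at h2
      exact lt_irrefl _ h2
    · -- orthogonal case
      have hz : inn (Ψᴴ *ᵥ a) (Ψᴴ *ᵥ b) = 0 := by
        unfold inn
        apply Finset.sum_eq_zero
        intro k _
        by_cases hk : k = i
        · subst hk
          rw [hv k (by exact hij ∘ Eq.symm ∘ Eq.symm), mul_zero]
        · rw [hu k hk, map_zero, zero_mul]
      rw [hinv] at hz
      rw [hz, norm_zero] at h1
      exact lt_irrefl _ h1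
end

section
/- Let a ∈ ℂ^n be nonzero, c ∈ ℂ with |c| = 1, and b = c·a. Suppose sign(Re aᵢ) = sign(Re bᵢ) and sign(Im aᵢ) = sign(Im bᵢ) for all i, and f₃(a) = f₃(b) where f₃(x) = Σ_{xᵢ≠0} msign(Re xᵢ)·Im xᵢ/(|Re xᵢ|+|Im xᵢ|). Then c = 1, i.e., a = b. -/
open Matrix Finset Complex

noncomputable def sgn (t : ℝ) : ℤ := if 0 < t then 1 else if t < 0 then -1 else 0

noncomputable def msign (t : ℝ) : ℝ := if 0 ≤ t then 1 else -1

noncomputable def f3 {n : ℕ} (x : Fin n → ℂ) : ℝ :=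
  ∑ i ∈ Finset.univ.filter (fun i => x i ≠ 0),
    msign (x i).re * (x i).im / (|(x i).re| + |(x i).im|)

lemma sgn_cases {x X : ℝ} (h : sgn x = sgn X) :
    (0 < x ∧ 0 < X) ∨ (x < 0 ∧ X < 0) ∨ (x = 0 ∧ X = 0) := by
  unfold sgn at h
  split_ifs at h <;>
    first
    | (left; constructor <;> linarith)
    | (right; left; constructor <;> linarith)
    | (right; right; constructor <;> linarith)

lemma msign_mul (x : ℝ) : msign x * x = |x| := by
  unfold msign; split_ifs with h
  · rw [_root_.abs_of_nonneg h]; ring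
  · push_neg at h; rw [_root_.abs_of_neg h]; ring

lemma msign_eq_of_sgn {x X : ℝ} (h : sgn x = sgn X) : msign X = msign x := by
  rcases sgn_cases h with ⟨h1, h2⟩ | ⟨h1, h2⟩ | ⟨h1, h2⟩ <;>
    simp [msign, h1, h2, le_of_lt, not_le.mpr, le_refl]

lemma msign_mul_of_sgn {x X : ℝ} (h : sgn x = sgn X) : msign x * X = |X| := by
  rw [← msign_eq_of_sgn h, msign_mul]

lemma msign_pm (x : ℝ) : msign x = 1 ∨ msign x = -1 := by
  unfold msign; split_ifs <;> simp

theorem stmt16 {n : ℕ} (a : Fin n → ℂ) (ha : a ≠ 0) (c : ℂ) (hc : ‖c‖ = 1)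
    (b : Fin n → ℂ) (hb : b = c • a)
    (hre : ∀ i, sgn (a i).re = sgn (b i).re) (him : ∀ i, sgn (a i).im = sgn (b i).im)
    (hf3 : f3 a = f3 b) :
    c = 1 ∧ a = b := by
  have hc0 : c ≠ 0 := by
    intro h; rw [h] at hc; simp at hc
  have hbz : ∀ i, b i = 0 ↔ a i = 0 := by
    intro i; rw [hb]; simp [Pi.smul_apply, smul_eq_mul, mul_eq_zero, hc0]
  have hset : (Finset.univ.filter (fun i => b i ≠ 0)) =
      (Finset.univ.filter (fun i => a i ≠ 0)) := by
    ext i; simp [hbz i]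
  obtain ⟨i₀, hi₀⟩ : ∃ i, a i ≠ 0 := Function.ne_iff.mp ha
  have hD : ∀ z : ℂ, z ≠ 0 → 0 < |z.re| + |z.im| := by
    intro z hz
    by_contra h
    push_neg at h
    have h1 : |z.re| = 0 := by nlinarith [abs_nonneg z.re, abs_nonneg z.im]
    have h2 : |z.im| = 0 := by nlinarith [abs_nonneg z.re, abs_nonneg z.im]
    exact hz (Complex.ext (abs_eq_zero.mp h1) (abs_eq_zero.mp h2))
  -- per-coordinate identity
  have key : ∀ i ∈ Finset.univ.filter (fun i => a i ≠ 0),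
      msign (a i).re * (a i).im / (|(a i).re| + |(a i).im|)
        - msign (b i).re * (b i).im / (|(b i).re| + |(b i).im|)
      = c.im * (-(Complex.normSq (a i)) /
          ((|(a i).re| + |(a i).im|) * (|(b i).re| + |(b i).im|))) := by
    intro i hi
    rw [Finset.mem_filter] at hi
    have hia : a i ≠ 0 := hi.2
    have hib : b i ≠ 0 := fun h => hia ((hbz i).mp h)
    have hX : (b i).re = c.re * (a i).re - c.im * (a i).im := by
      rw [hb]; simp [Complex.mul_re]
    have hY : (b i).im = c.re * (a i).im + c.im * (a i).re := by
      rw [hb]; simp [Complex.mul_im]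
    have hnorm : Complex.normSq (a i) = (a i).re * (a i).re + (a i).im * (a i).im :=
      Complex.normSq_apply _
    set x := (a i).re with hxdef
    set y := (a i).im with hydef
    set X := (b i).re with hXdef
    set Y := (b i).im with hYdef
    have hDa' := hD _ hia
    have hDb' := hD _ hib
    have hsX : msign X = msign x := msign_eq_of_sgn (hre i)
    have habsX : msign x * X = |X| := msign_mul_of_sgn (hre i)
    have habsY : msign y * Y = |Y| := msign_mul_of_sgn (him i)
    have habsx : msign x * x = |x| := msign_mul x
    have habsy : msign y * y = |y| := msign_mul y
    rw [hsX, div_sub_div _ _ (ne_of_gt hDa') (ne_of_gt hDb'), ← mul_div_assoc]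
    rw [← habsX, ← habsY, ← habsx, ← habsy]
    rcases msign_pm x with hs | hs <;> rcases msign_pm y with ht | ht <;>
      rw [hs, ht, hnorm, hX, hY] <;> ring
  -- the total difference is zero
  have e2 : f3 b = ∑ i ∈ Finset.univ.filter (fun i => a i ≠ 0),
      msign (b i).re * (b i).im / (|(b i).re| + |(b i).im|) := by
    unfold f3; rw [hset]
  have hsum : ∑ i ∈ Finset.univ.filter (fun i => a i ≠ 0),
      (msign (a i).re * (a i).im / (|(a i).re| + |(a i).im|)
        - msign (b i).re * (b i).im / (|(b i).re| + |(b i).im|)) = 0 := by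
    rw [Finset.sum_sub_distrib, ← e2]
    have e1 : f3 a = ∑ i ∈ Finset.univ.filter (fun i => a i ≠ 0),
        msign (a i).re * (a i).im / (|(a i).re| + |(a i).im|) := rfl
    rw [← e1, hf3, sub_self]
  rw [Finset.sum_congr rfl key, ← Finset.mul_sum] at hsum
  -- the sum factor is negative
  have hS : ∑ i ∈ Finset.univ.filter (fun i => a i ≠ 0),
      (-(Complex.normSq (a i)) /
        ((|(a i).re| + |(a i).im|) * (|(b i).re| + |(b i).im|))) < 0 := by
    apply Finset.sum_neg
    · intro i hi
      rw [Finset.mem_filter] at hi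
      have hia : a i ≠ 0 := hi.2
      have hib : b i ≠ 0 := fun h => hia ((hbz i).mp h)
      apply div_neg_of_neg_of_pos
      · simpa using Complex.normSq_pos.mpr hia
      · exact mul_pos (hD _ hia) (hD _ hib)
    · exact ⟨i₀, by simp [hi₀]⟩
  have him0 : c.im = 0 := by
    rcases mul_eq_zero.mp hsum with h | h
    · exact h
    · exact absurd h (ne_of_lt hS)
  have hnc : Complex.normSq c = 1 := by
    rw [← Complex.sq_norm, hc]; norm_num
  have hre1 : c.re = 1 ∨ c.re = -1 := by
    apply mul_self_eq_one_iff.mp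
    have := Complex.normSq_apply c
    rw [him0] at this
    nlinarith [hnc]
  rcases hre1 with h1 | h1
  · have hc1 : c = 1 := Complex.ext (by simp [h1]) (by simp [him0])
    exact ⟨hc1, by rw [hb, hc1, one_smul]⟩
  · exfalso
    have hcm : c = -1 := Complex.ext (by simp [h1]) (by simp [him0])
    have hbre : (b i₀).re = -(a i₀).re := by rw [hb, hcm]; simp
    have hbim : (b i₀).im = -(a i₀).im := by rw [hb, hcm]; simp
    have hx0 : (a i₀).re = 0 := by
      have h := hre i₀
      rw [hbre] at h
      rcases sgn_cases h with ⟨h1', h2'⟩ | ⟨h1', h2'⟩ | ⟨h1', h2'⟩ <;> linarith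
    have hy0 : (a i₀).im = 0 := by
      have h := him i₀
      rw [hbim] at h
      rcases sgn_cases h with ⟨h1', h2'⟩ | ⟨h1', h2'⟩ | ⟨h1', h2'⟩ <;> linarith
    exact hi₀ (Complex.ext hx0 hy0)
end

section
/- The set S(s₁,s₂,s₃) = {x ∈ ℂ^n \ {0} : f₁(x)=s₁, f₂(x)=s₂, f₃(x)=s₃}, where f₁(x) = Σᵢ 3^{2(i−1)}sign(Re xᵢ) + 3^{2i−1}sign(Im xᵢ), f₂(x) = ‖x‖₁, and f₃(x) = Σ_{xᵢ≠0} msign(Re xᵢ)·Im xᵢ/(|Re xᵢ|+|Im xᵢ|), satisfies: for all distinct a, b ∈ S(s₁,s₂,s₃), 0 < |⟨a,b⟩| < ‖a‖₂·‖b‖₂. -/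
open Matrix Finset Complex

noncomputable def f1 {n : ℕ} (x : Fin n → ℂ) : ℤ :=
  ∑ i : Fin n, (3 ^ (2 * (i : ℕ)) * sgn (x i).re + 3 ^ (2 * (i : ℕ) + 1) * sgn (x i).im)

noncomputable def f2 {n : ℕ} (x : Fin n → ℂ) : ℝ := ∑ i, ‖x i‖

/-! ### Auxiliary lemmas -/

section Aux

lemma sgn_abs_le (t : ℝ) : |sgn t| ≤ 1 := by unfold sgn; split_ifs <;> simp

lemma digits_unique : ∀ (m : ℕ) (u v : ℕ → ℤ), (∀ i, |u i| ≤ 1) → (∀ i, |v i| ≤ 1) →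
    (∑ i ∈ Finset.range m, u i * 3 ^ i) = (∑ i ∈ Finset.range m, v i * 3 ^ i) →
    ∀ i < m, u i = v i := by
  intro m
  induction m with
  | zero => intro u v _ _ _ i hi; omega
  | succ m ih =>
    intro u v hu hv hsum
    rw [Finset.sum_range_succ, Finset.sum_range_succ] at hsum
    have hb : |∑ i ∈ Finset.range m, (v i - u i) * 3 ^ i| ≤ 3 ^ m - 1 := by
      calc |∑ i ∈ Finset.range m, (v i - u i) * 3 ^ i|
          ≤ ∑ i ∈ Finset.range m, |(v i - u i) * 3 ^ i| := Finset.abs_sum_le_sum_abs _ _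
        _ ≤ ∑ i ∈ Finset.range m, 2 * 3 ^ i := by
            refine Finset.sum_le_sum fun i _ => ?_
            rw [abs_mul, _root_.abs_pow]
            have h1 := hu i; have h2 := hv i
            have : |v i - u i| ≤ 2 := by
              have := abs_sub (v i) (u i); omega
            calc |v i - u i| * |(3:ℤ)| ^ i ≤ 2 * |(3:ℤ)| ^ i := by
                  exact mul_le_mul_of_nonneg_right this (by positivity)
              _ = 2 * 3 ^ i := by norm_num
        _ = 3 ^ m - 1 := by
            have := geom_sum_mul (3:ℤ) m
            have h2 : ∑ i ∈ Finset.range m, 2 * 3 ^ i = (∑ i ∈ Finset.range m, (3:ℤ)^i) * (3 - 1) := by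
              rw [Finset.sum_mul]; ring_nf
            rw [h2, this]
    have key : u m = v m := by
      by_contra hne
      have h1 : (u m - v m) * 3 ^ m = ∑ i ∈ Finset.range m, (v i - u i) * 3 ^ i := by
        simp only [sub_mul, Finset.sum_sub_distrib]
        linarith [hsum]
      have h2 : (1:ℤ) ≤ |u m - v m| := Int.one_le_abs (sub_ne_zero.mpr hne)
      have h3 : |(u m - v m) * 3 ^ m| = |u m - v m| * 3 ^ m := by
        rw [abs_mul, _root_.abs_pow]; norm_num
      have h4 : (3:ℤ)^m ≤ |u m - v m| * 3^m := by
        nlinarith [pow_pos (by norm_num : (0:ℤ) < 3) m]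
      rw [h1] at h3
      linarith
    intro i hi
    rcases Nat.lt_succ_iff_lt_or_eq.1 hi with h | h
    · have hsum' : (∑ i ∈ Finset.range m, u i * 3 ^ i) = ∑ i ∈ Finset.range m, v i * 3 ^ i := by
        rw [key] at hsum; linarith
      exact ih u v hu hv hsum' i h
    · subst h; exact key

lemma pair_sum (w : ℕ → ℤ) : ∀ n, ∑ j ∈ Finset.range (2*n), w j = ∑ k ∈ Finset.range n, (w (2*k) + w (2*k+1)) := by
  intro n
  induction n with
  | zero => simp
  | succ n ih =>
    have h : 2 * (n+1) = (2*n + 1) + 1 := by ring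
    rw [h, Finset.sum_range_succ, Finset.sum_range_succ, Finset.sum_range_succ, ih]
    ring

noncomputable def dgt {n : ℕ} (x : Fin n → ℂ) (j : ℕ) : ℤ :=
  if hj : j / 2 < n then
    (if j % 2 = 0 then sgn (x ⟨j/2, hj⟩).re else sgn (x ⟨j/2, hj⟩).im) else 0

lemma dgt_abs_le {n : ℕ} (x : Fin n → ℂ) (j : ℕ) : |dgt x j| ≤ 1 := by
  unfold dgt; split_ifs <;> simp [sgn_abs_le]

lemma f1_rep {n : ℕ} (x : Fin n → ℂ) :
    f1 x = ∑ j ∈ Finset.range (2*n), dgt x j * 3 ^ j := by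
  rw [pair_sum, f1,
    ← Fin.sum_univ_eq_sum_range (fun k => (dgt x (2*k) * 3 ^ (2*k) + dgt x (2*k+1) * 3 ^ (2*k+1))) n]
  refine Finset.sum_congr rfl fun k _ => ?_
  have hk' : (k:ℕ) < n := k.isLt
  have e1 : (2*(k:ℕ)) / 2 = (k:ℕ) := by omega
  have e2 : (2*(k:ℕ)) % 2 = 0 := by omega
  have e3 : (2*(k:ℕ)+1) / 2 = (k:ℕ) := by omega
  have e4 : (2*(k:ℕ)+1) % 2 = 1 := by omega
  simp only [dgt, e1, e2, e3, e4, dif_pos hk']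
  norm_num
  ring

lemma f1_sgn_eq {n : ℕ} (a b : Fin n → ℂ) (h : f1 a = f1 b) (i : Fin n) :
    sgn (a i).re = sgn (b i).re ∧ sgn (a i).im = sgn (b i).im := by
  rw [f1_rep, f1_rep] at h
  have := digits_unique (2*n) (dgt a) (dgt b) (dgt_abs_le a) (dgt_abs_le b) h
  have h1 := this (2*(i:ℕ)) (by omega)
  have h2 := this (2*(i:ℕ)+1) (by omega)
  have e1 : (2*(i:ℕ)) / 2 = (i:ℕ) := by omega
  have e2 : (2*(i:ℕ)) % 2 = 0 := by omega
  have e3 : (2*(i:ℕ)+1) / 2 = (i:ℕ) := by omega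
  have e4 : (2*(i:ℕ)+1) % 2 = 1 := by omega
  have hi : (i:ℕ) < n := i.isLt
  simp only [dgt, e1, e2, e3, e4, dif_pos hi] at h1 h2
  simp only [Fin.eta] at h1 h2
  constructor
  · simpa using h1
  · simpa using h2

noncomputable def gg (z : ℂ) : ℝ := msign z.re * z.im / (|z.re| + |z.im|)

lemma msign_congr {s t : ℝ} (h : sgn s = sgn t) : msign s = msign t := by
  unfold sgn at h; unfold msign
  split_ifs at h ⊢ <;> first | rfl | omega | linarith

lemma abs_eq_msign (t : ℝ) : |t| = msign t * t := by
  unfold msign; split_ifs with h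
  · rw [_root_.abs_of_nonneg h, one_mul]
  · rw [_root_.abs_of_neg (lt_of_not_ge h)]; ring

lemma abs_eq_msign' {s t : ℝ} (h : sgn s = sgn t) : |s| = msign t * s := by
  rw [abs_eq_msign, msign_congr h]

lemma msign_sq (t : ℝ) : msign t * msign t = 1 := by
  unfold msign; split_ifs <;> norm_num

lemma mul_nonneg_of_sgn_eq {s t : ℝ} (h : sgn s = sgn t) : 0 ≤ s * t := by
  unfold sgn at h; split_ifs at h <;> nlinarith

lemma mul_pos_of_sgn_eq {s t : ℝ} (h : sgn s = sgn t) (hs : s ≠ 0) : 0 < s * t := by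
  unfold sgn at h; split_ifs at h <;> first | nlinarith | (exfalso; apply hs; linarith)

lemma pos_of_sgn_smul {c s : ℝ} (h : sgn (c * s) = sgn s) (hs : s ≠ 0) : 0 < c := by
  rcases lt_trichotomy s 0 with h1 | h1 | h1
  · unfold sgn at h; split_ifs at h <;> nlinarith
  · exact absurd h1 hs
  · unfold sgn at h; split_ifs at h <;> nlinarith

lemma abs_pair_pos {z : ℂ} (hz : z ≠ 0) : 0 < |z.re| + |z.im| := by
  rcases abs_nonneg z.re |>.lt_or_eq with h | h
  · have := abs_nonneg z.im; linarith
  · have hre : z.re ≠ 0 ∨ z.im ≠ 0 := by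
      by_contra hc; push_neg at hc
      exact hz (Complex.ext hc.1 hc.2)
    rcases hre with h1 | h1
    · exact absurd (abs_eq_zero.1 h.symm) h1
    · have := abs_pos.2 h1; have := abs_nonneg z.re; linarith

lemma gg_diff (r z : ℂ) (hz : z ≠ 0) (hw : r * z ≠ 0)
    (h1 : sgn (r*z).re = sgn z.re) (h2 : sgn (r*z).im = sgn z.im) :
    gg (r*z) - gg z =
      r.im * (z.re^2 + z.im^2) / ((|(r*z).re| + |(r*z).im|) * (|z.re| + |z.im|)) := by
  have Dw : 0 < |(r*z).re| + |(r*z).im| := abs_pair_pos hw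
  have Dz : 0 < |z.re| + |z.im| := abs_pair_pos hz
  have hM : msign (r*z).re = msign z.re := msign_congr h1
  have e1 : |(r*z).re| = msign z.re * (r*z).re := by rw [← hM]; exact abs_eq_msign _
  have e2 : |(r*z).im| = msign z.im * (r*z).im := abs_eq_msign' h2
  have e3 : |z.re| = msign z.re * z.re := abs_eq_msign _
  have e4 : |z.im| = msign z.im * z.im := abs_eq_msign _
  have hmr : (r*z).re = r.re * z.re - r.im * z.im := by simp [Complex.mul_re]
  have hmi : (r*z).im = r.re * z.im + r.im * z.re := by simp [Complex.mul_im]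
  have hm : msign z.re = 1 ∨ msign z.re = -1 := by unfold msign; split_ifs <;> simp
  have he : msign z.im = 1 ∨ msign z.im = -1 := by unfold msign; split_ifs <;> simp
  rw [e1, e2] at Dw
  rw [e3, e4] at Dz
  rw [gg, gg, hM, e1, e2, e3, e4]
  rw [div_sub_div _ _ (ne_of_gt Dw) (ne_of_gt Dz),
    div_eq_div_iff (mul_pos Dw Dz).ne' (mul_pos Dw Dz).ne']
  rw [hmr, hmi]
  rcases hm with hm | hm <;> rcases he with he | he <;> rw [hm, he] <;> ring

end Aux

theorem stmt19 {n : ℕ} (s₁ : ℤ) (s₂ s₃ : ℝ) (a b : Fin n → ℂ)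
    (ha : a ∈ {x : Fin n → ℂ | x ≠ 0 ∧ f1 x = s₁ ∧ f2 x = s₂ ∧ f3 x = s₃})
    (hb : b ∈ {x : Fin n → ℂ | x ≠ 0 ∧ f1 x = s₁ ∧ f2 x = s₂ ∧ f3 x = s₃})
    (hne : a ≠ b) :
    0 < ‖inn a b‖ ∧ ‖inn a b‖ < l2norm a * l2norm b := by
  obtain ⟨ha0, ha1, ha2, ha3⟩ := ha
  obtain ⟨hb0, hb1, hb2, hb3⟩ := hb
  have hf1 : f1 a = f1 b := by rw [ha1, hb1]
  have hs := f1_sgn_eq a b hf1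
  -- a nonzero component
  obtain ⟨i₀, hi₀⟩ : ∃ i, a i ≠ 0 := by
    by_contra hc; push_neg at hc
    exact ha0 (funext fun i => hc i)
  -- real part of inner product
  have hre : (inn a b).re = ∑ i, ((a i).re * (b i).re + (a i).im * (b i).im) := by
    rw [inn, Complex.re_sum]
    refine Finset.sum_congr rfl fun i _ => ?_
    simp [Complex.mul_re]
  have hpos : 0 < (inn a b).re := by
    rw [hre]
    refine Finset.sum_pos' (fun i _ => ?_) ⟨i₀, Finset.mem_univ i₀, ?_⟩
    · have h1 := mul_nonneg_of_sgn_eq (hs i).1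
      have h2 := mul_nonneg_of_sgn_eq (hs i).2
      linarith
    · have hre0 : (a i₀).re ≠ 0 ∨ (a i₀).im ≠ 0 := by
        by_contra hc; push_neg at hc
        exact hi₀ (Complex.ext hc.1 hc.2)
      rcases hre0 with h | h
      · have := mul_pos_of_sgn_eq (hs i₀).1 h
        have := mul_nonneg_of_sgn_eq (hs i₀).2
        linarith
      · have := mul_pos_of_sgn_eq (hs i₀).2 h
        have := mul_nonneg_of_sgn_eq (hs i₀).1
        linarith
  have hinn_ne : inn a b ≠ 0 := by
    intro h; rw [h] at hpos; simp at hpos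
  refine ⟨norm_pos_iff.mpr hinn_ne, ?_⟩
  -- Euclidean space setup
  set A : EuclideanSpace ℂ (Fin n) := (WithLp.equiv 2 (Fin n → ℂ)).symm a with hA
  set B : EuclideanSpace ℂ (Fin n) := (WithLp.equiv 2 (Fin n → ℂ)).symm b with hB
  have hAapp : ∀ i, A i = a i := fun i => rfl
  have hBapp : ∀ i, B i = b i := fun i => rfl
  have hinner : (inner ℂ A B : ℂ) = inn a b := by
    rw [PiLp.inner_apply, inn]
    simp only [RCLike.inner_apply', hAapp, hBapp]
  have hnormA : ‖A‖ = l2norm a := by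
    rw [EuclideanSpace.norm_eq, l2norm]
    congr 1
  have hnormB : ‖B‖ = l2norm b := by
    rw [EuclideanSpace.norm_eq, l2norm]
    congr 1
  have hle : ‖inn a b‖ ≤ l2norm a * l2norm b := by
    rw [← hinner, ← hnormA, ← hnormB]
    exact norm_inner_le_norm A B
  refine lt_of_le_of_ne hle fun heq => ?_
  -- equality case of Cauchy-Schwarz
  have hA0 : A ≠ 0 := by
    intro h
    exact ha0 (funext fun i => by rw [← hAapp i, h]; rfl)
  have hB0 : B ≠ 0 := by
    intro h
    exact hb0 (funext fun i => by rw [← hBapp i, h]; rfl)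
  have heq' : ‖(inner ℂ A B : ℂ)‖ = ‖A‖ * ‖B‖ := by
    rw [hinner, hnormA, hnormB, heq]
  obtain ⟨r, hr0, hBrA⟩ := (norm_inner_eq_norm_iff hA0 hB0).1 heq'
  have hbr : ∀ i, b i = r * a i := by
    intro i
    have := congrFun (congrArg (WithLp.equiv 2 (Fin n → ℂ)) hBrA) i
    simpa [hAapp, hBapp] using this
  -- |r| = 1 from f2
  have hf2pos : 0 < f2 a := by
    rw [f2]
    refine Finset.sum_pos' (fun i _ => norm_nonneg _) ⟨i₀, Finset.mem_univ i₀, ?_⟩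
    exact norm_pos_iff.mpr hi₀
  have habsr : ‖r‖ = 1 := by
    have h1 : f2 b = ‖r‖ * f2 a := by
      rw [f2, f2, Finset.mul_sum]
      refine Finset.sum_congr rfl fun i _ => by rw [hbr i]; exact norm_mul r (a i)
    have h2 : f2 b = f2 a := by rw [ha2, hb2]
    rw [h2] at h1
    have h3 : ‖r‖ * f2 a = 1 * f2 a := by rw [one_mul, ← h1]
    exact mul_right_cancel₀ (ne_of_gt hf2pos) h3
  -- r.im = 0 from f3
  have hfilter : Finset.univ.filter (fun i => b i ≠ 0) = Finset.univ.filter (fun i => a i ≠ 0) := by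
    refine Finset.filter_congr fun i _ => ?_
    rw [hbr i]
    simp [mul_ne_zero_iff, hr0]
  have hrim : r.im = 0 := by
    by_contra hrim
    have hdiff : f3 b - f3 a = ∑ i ∈ Finset.univ.filter (fun i => a i ≠ 0),
        r.im * ((a i).re^2 + (a i).im^2) /
          ((|(r * a i).re| + |(r * a i).im|) * (|(a i).re| + |(a i).im|)) := by
      rw [f3, f3, hfilter, ← Finset.sum_sub_distrib]
      refine Finset.sum_congr rfl fun i hi => ?_
      have hai : a i ≠ 0 := (Finset.mem_filter.1 hi).2
      have hbi : r * a i ≠ 0 := mul_ne_zero hr0 hai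
      have h1 : sgn (r * a i).re = sgn (a i).re := by rw [← hbr i]; exact ((hs i).1).symm
      have h2 : sgn (r * a i).im = sgn (a i).im := by rw [← hbr i]; exact ((hs i).2).symm
      have := gg_diff r (a i) hai hbi h1 h2
      rw [gg, gg] at this
      rw [hbr i]
      exact this
    have hzero : f3 b - f3 a = 0 := by rw [ha3, hb3]; ring
    rw [hzero] at hdiff
    rcases lt_or_gt_of_ne hrim with h | h
    · have : ∑ i ∈ Finset.univ.filter (fun i => a i ≠ 0),
          r.im * ((a i).re^2 + (a i).im^2) /
            ((|(r * a i).re| + |(r * a i).im|) * (|(a i).re| + |(a i).im|)) < 0 := by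
        refine Finset.sum_neg (fun i hi => ?_) ⟨i₀, Finset.mem_filter.2 ⟨Finset.mem_univ i₀, hi₀⟩⟩
        have hai : a i ≠ 0 := (Finset.mem_filter.1 hi).2
        have hbi : r * a i ≠ 0 := mul_ne_zero hr0 hai
        have hsq : 0 < (a i).re^2 + (a i).im^2 := by
          rcases (by by_contra hc; push_neg at hc; exact hai (Complex.ext hc.1 hc.2) :
            (a i).re ≠ 0 ∨ (a i).im ≠ 0) with hh | hh <;> positivity
        have hd : 0 < (|(r * a i).re| + |(r * a i).im|) * (|(a i).re| + |(a i).im|) :=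
          mul_pos (abs_pair_pos hbi) (abs_pair_pos hai)
        exact div_neg_of_neg_of_pos (mul_neg_of_neg_of_pos h hsq) hd
      linarith [hdiff]
    · have : 0 < ∑ i ∈ Finset.univ.filter (fun i => a i ≠ 0),
          r.im * ((a i).re^2 + (a i).im^2) /
            ((|(r * a i).re| + |(r * a i).im|) * (|(a i).re| + |(a i).im|)) := by
        refine Finset.sum_pos (fun i hi => ?_) ⟨i₀, Finset.mem_filter.2 ⟨Finset.mem_univ i₀, hi₀⟩⟩
        have hai : a i ≠ 0 := (Finset.mem_filter.1 hi).2
        have hbi : r * a i ≠ 0 := mul_ne_zero hr0 hai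
        have hsq : 0 < (a i).re^2 + (a i).im^2 := by
          rcases (by by_contra hc; push_neg at hc; exact hai (Complex.ext hc.1 hc.2) :
            (a i).re ≠ 0 ∨ (a i).im ≠ 0) with hh | hh <;> positivity
        have hd : 0 < (|(r * a i).re| + |(r * a i).im|) * (|(a i).re| + |(a i).im|) :=
          mul_pos (abs_pair_pos hbi) (abs_pair_pos hai)
        positivity
      linarith [hdiff]
  -- r.re > 0 and |r| = 1 → r = 1
  have hrre : 0 < r.re := by
    have hre0 : (a i₀).re ≠ 0 ∨ (a i₀).im ≠ 0 := by
      by_contra hc; push_neg at hc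
      exact hi₀ (Complex.ext hc.1 hc.2)
    rcases hre0 with h | h
    · have h1 : sgn ((b i₀).re) = sgn ((a i₀).re) := ((hs i₀).1).symm
      have h2 : (b i₀).re = r.re * (a i₀).re := by
        rw [hbr i₀, Complex.mul_re, hrim]; ring
      rw [h2] at h1
      exact pos_of_sgn_smul h1 h
    · have h1 : sgn ((b i₀).im) = sgn ((a i₀).im) := ((hs i₀).2).symm
      have h2 : (b i₀).im = r.re * (a i₀).im := by
        rw [hbr i₀, Complex.mul_im, hrim]; ring
      rw [h2] at h1
      exact pos_of_sgn_smul h1 h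
  have hr1 : r = 1 := by
    have habs2 : ‖r‖ = |r.re| := by
      rw [Complex.norm_def, Complex.normSq_apply, hrim]
      norm_num [Real.sqrt_mul_self_eq_abs]
    rw [habs2] at habsr
    have : r.re = 1 := by rw [_root_.abs_of_pos hrre] at habsr; exact habsr
    exact Complex.ext this hrim
  apply hne
  funext i
  rw [hbr i, hr1, one_mul]
end
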